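/- Let N ≥ 2 be an even natural number. Then the sum, over all set partitions π of {1,…,N} all of whose blocks have even cardinality, of (−1)^{|π|} · ∏_{B ∈ π} (|B|−1)! (where |π| is the number of blocks of π), equals −(N−1)!! · (N−3)!!. -/

import Mathlib

open Finset Nat

/-- A finset of finsets is a partition of `Fin N` with all blocks of even
(nonzero) cardinality. -/
def IsEvenPartition (N : ℕ) (P : Finset (Finset (Fin N))) : Prop :=
  (∀ B ∈ P, B.Nonempty ∧ Even B.card) ∧
  (∀ B ∈ P, ∀ C ∈ P, B ≠ C → Disjoint B C) ∧
  P.sup id = Finset.univ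

section EP
variable {α : Type*} [DecidableEq α]

def IsEP (s : Finset α) (P : Finset (Finset α)) : Prop :=
  (∀ B ∈ P, B.Nonempty ∧ Even B.card) ∧
  (∀ B ∈ P, ∀ C ∈ P, B ≠ C → Disjoint B C) ∧
  P.sup id = s

open Classical in
noncomputable def W (s : Finset α) : ℤ :=
  ∑ P ∈ s.powerset.powerset.filter (fun P => IsEP s P),
    (-1 : ℤ) ^ P.card * ∏ B ∈ P, ((B.card - 1).factorial : ℤ)

lemma block_subset {s : Finset α} {P : Finset (Finset α)} (h : IsEP s P)
    {B : Finset α} (hB : B ∈ P) : B ⊆ s := by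
  have := Finset.le_sup (f := id) hB
  rw [h.2.2] at this; exact this

lemma exists_block {s : Finset α} {P : Finset (Finset α)} (h : IsEP s P)
    {a : α} (ha : a ∈ s) :
    ∃ B ∈ P, a ∈ B ∧ P.filter (fun C => a ∈ C) = {B} := by
  rw [← h.2.2, Finset.mem_sup] at ha
  obtain ⟨B, hBP, haB⟩ := ha
  simp only [id] at haB
  refine ⟨B, hBP, haB, ?_⟩
  ext C
  simp only [Finset.mem_filter, Finset.mem_singleton]
  constructor
  · rintro ⟨hCP, haC⟩
    by_contra hne
    exact (Finset.disjoint_left.1 (h.2.1 C hCP B hBP hne) haC) haB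
  · rintro rfl; exact ⟨hBP, haB⟩

noncomputable def blockOf (a : α) (P : Finset (Finset α)) : Finset α :=
  (P.filter (fun C => a ∈ C)).sup id

lemma blockOf_eq {s : Finset α} {P : Finset (Finset α)} (h : IsEP s P)
    {a : α} {B : Finset α} (hBP : B ∈ P) (haB : a ∈ B) : blockOf a P = B := by
  obtain ⟨B', hB'P, haB', hfil⟩ := exists_block h (block_subset h hBP haB)
  have : B = B' := by
    have : B ∈ P.filter (fun C => a ∈ C) := Finset.mem_filter.2 ⟨hBP, haB⟩
    rwa [hfil, Finset.mem_singleton] at this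
  subst this
  rw [blockOf, hfil, Finset.sup_singleton, id]

lemma erase_EP {s : Finset α} {P : Finset (Finset α)} (h : IsEP s P)
    {B : Finset α} (hBP : B ∈ P) : IsEP (s \ B) (P.erase B) := by
  refine ⟨fun C hC => h.1 C (Finset.mem_of_mem_erase hC),
    fun C hC D hD => h.2.1 C (Finset.mem_of_mem_erase hC) D (Finset.mem_of_mem_erase hD), ?_⟩
  ext x
  rw [Finset.mem_sup, Finset.mem_sdiff]
  constructor
  · rintro ⟨C, hC, hxC⟩
    obtain ⟨hne, hCP⟩ := Finset.mem_erase.1 hC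
    simp only [id] at hxC
    exact ⟨block_subset h hCP hxC, fun hxB =>
      (Finset.disjoint_left.1 (h.2.1 C hCP B hBP hne) hxC) hxB⟩
  · rintro ⟨hxs, hxB⟩
    rw [← h.2.2, Finset.mem_sup] at hxs
    obtain ⟨C, hCP, hxC⟩ := hxs
    exact ⟨C, Finset.mem_erase.2 ⟨fun hne => hxB (hne ▸ hxC), hCP⟩, hxC⟩

lemma insert_EP {s B : Finset α} {Q : Finset (Finset α)} (h : IsEP (s \ B) Q)
    (hBs : B ⊆ s) (hBne : B.Nonempty) (hBev : Even B.card) :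
    IsEP s (insert B Q) ∧ B ∉ Q := by
  have hBQ : B ∉ Q := by
    intro hBQ
    obtain ⟨a, haB⟩ := hBne
    have := block_subset h hBQ haB
    exact (Finset.mem_sdiff.1 this).2 haB
  have hdisj : ∀ C ∈ Q, Disjoint B C := by
    intro C hC
    exact Finset.disjoint_left.2 fun x hxB hxC =>
      (Finset.mem_sdiff.1 (block_subset h hC hxC)).2 hxB
  refine ⟨⟨?_, ?_, ?_⟩, hBQ⟩
  · intro C hC
    rcases Finset.mem_insert.1 hC with rfl | hC
    · exact ⟨hBne, hBev⟩
    · exact h.1 C hC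
  · intro C hC D hD hne
    rcases Finset.mem_insert.1 hC with hc | hc
    · rcases Finset.mem_insert.1 hD with hd | hd
      · exact absurd (hc.trans hd.symm) hne
      · exact hc ▸ hdisj D hd
    · rcases Finset.mem_insert.1 hD with hd | hd
      · exact hd ▸ (hdisj C hc).symm
      · exact h.2.1 C hc D hd hne
  · rw [Finset.sup_insert, h.2.2, id]
    exact Finset.union_sdiff_of_subset hBs

lemma mem_parts {s : Finset α} {P : Finset (Finset α)} [DecidablePred (IsEP s)] :
    P ∈ s.powerset.powerset.filter (fun P => IsEP s P) ↔ IsEP s P := by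
  rw [Finset.mem_filter, Finset.mem_powerset]
  refine ⟨fun h => h.2, fun h => ⟨fun B hB => Finset.mem_powerset.2 (block_subset h hB), h⟩⟩

lemma W_rec (s : Finset α) (a : α) (ha : a ∈ s) :
    W s = ∑ B ∈ s.powerset.filter (fun B => a ∈ B ∧ Even B.card),
        -(((B.card - 1).factorial : ℤ)) * W (s \ B) := by
  classical
  rw [W, ← Finset.sum_fiberwise_of_maps_to (t := s.powerset.filter (fun B => a ∈ B ∧ Even B.card))
    (g := fun P => blockOf a P) ?_]
  · refine Finset.sum_congr rfl fun B hB => ?_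
    rw [Finset.mem_filter, Finset.mem_powerset] at hB
    obtain ⟨hBs, haB, hBev⟩ := hB
    have hBne : B.Nonempty := ⟨a, haB⟩
    rw [W, Finset.mul_sum]
    refine Finset.sum_bij' (fun P _ => P.erase B) (fun Q _ => insert B Q) ?_ ?_ ?_ ?_ ?_
    · intro P hP
      rw [Finset.mem_filter] at hP
      obtain ⟨hP, hgP⟩ := hP
      rw [mem_parts] at hP
      have hBP : B ∈ P := by
        obtain ⟨B', hB'P, haB', _⟩ := exists_block hP ha
        rw [← hgP, blockOf_eq hP hB'P haB']; exact hB'P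
      exact mem_parts.2 (erase_EP hP hBP)
    · intro Q hQ
      rw [mem_parts] at hQ
      obtain ⟨hep, hBQ⟩ := insert_EP hQ hBs hBne hBev
      rw [Finset.mem_filter, mem_parts]
      exact ⟨hep, blockOf_eq hep (Finset.mem_insert_self B Q) haB⟩
    · intro P hP
      rw [Finset.mem_filter] at hP
      obtain ⟨hP, hgP⟩ := hP
      rw [mem_parts] at hP
      have hBP : B ∈ P := by
        obtain ⟨B', hB'P, haB', _⟩ := exists_block hP ha
        rw [← hgP, blockOf_eq hP hB'P haB']; exact hB'P
      exact Finset.insert_erase hBP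
    · intro Q hQ
      rw [mem_parts] at hQ
      obtain ⟨hep, hBQ⟩ := insert_EP hQ hBs hBne hBev
      exact Finset.erase_insert hBQ
    · intro P hP
      rw [Finset.mem_filter] at hP
      obtain ⟨hP, hgP⟩ := hP
      rw [mem_parts] at hP
      have hBP : B ∈ P := by
        obtain ⟨B', hB'P, haB', _⟩ := exists_block hP ha
        rw [← hgP, blockOf_eq hP hB'P haB']; exact hB'P
      have hpos : 1 ≤ P.card := Finset.card_pos.2 ⟨B, hBP⟩
      have hcard : P.card = (P.erase B).card + 1 := by
        rw [Finset.card_erase_of_mem hBP]; omega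
      rw [hcard, pow_succ, ← Finset.mul_prod_erase _ _ hBP]
      ring
    
  · intro P hP
    rw [mem_parts] at hP
    obtain ⟨B, hBP, haB, _⟩ := exists_block hP ha
    show blockOf a P ∈ _
    rw [blockOf_eq hP hBP haB, Finset.mem_filter, Finset.mem_powerset]
    exact ⟨block_subset hP hBP, haB, (hP.1 B hBP).2⟩

end EP

noncomputable def G : ℕ → ℤ := fun n =>
  if n = 0 then 1 else if Even n then -(((n - 1)‼ : ℤ) * ((n - 3)‼ : ℤ)) else 0

section EP2
variable {α : Type*} [DecidableEq α]

lemma W_empty : W (∅ : Finset α) = 1 := by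
  classical
  rw [W]
  have hset : (∅ : Finset α).powerset.powerset.filter (fun P => IsEP ∅ P) = {∅} := by
    ext P
    rw [mem_parts, Finset.mem_singleton]
    constructor
    · intro h
      rw [Finset.eq_empty_iff_forall_notMem]
      intro B hB
      obtain ⟨x, hx⟩ := (h.1 B hB).1
      exact Finset.notMem_empty x (block_subset h hB hx)
    · rintro rfl
      exact ⟨by simp, by simp, rfl⟩
  rw [hset]
  simp

lemma count_lemma (s : Finset α) (a : α) (ha : a ∈ s) (k : ℕ) :
    (s.powerset.filter (fun B => a ∈ B ∧ B.card = k + 1)).card = (s.card - 1).choose k := by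
  classical
  rw [← Finset.card_erase_of_mem ha, ← Finset.card_powersetCard k (s.erase a)]
  refine Finset.card_bij' (fun B _ => B.erase a) (fun C _ => insert a C) ?_ ?_ ?_ ?_
  · intro B hB
    rw [Finset.mem_filter, Finset.mem_powerset] at hB
    obtain ⟨hBs, haB, hcard⟩ := hB
    rw [Finset.mem_powersetCard]
    exact ⟨fun x hx => Finset.mem_erase.2 ⟨(Finset.mem_erase.1 hx).1,
      hBs (Finset.mem_erase.1 hx).2⟩, by rw [Finset.card_erase_of_mem haB, hcard]; omega⟩
  · intro C hC
    rw [Finset.mem_powersetCard] at hC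
    obtain ⟨hCs, hcard⟩ := hC
    have haC : a ∉ C := fun h => (Finset.mem_erase.1 (hCs h)).1 rfl
    rw [Finset.mem_filter, Finset.mem_powerset]
    refine ⟨Finset.insert_subset ha (hCs.trans (Finset.erase_subset a s)), Finset.mem_insert_self a C, ?_⟩
    rw [Finset.card_insert_of_notMem haC, hcard]
  · intro B hB
    rw [Finset.mem_filter] at hB
    exact Finset.insert_erase hB.2.1
  · intro C hC
    rw [Finset.mem_powersetCard] at hC
    have haC : a ∉ C := fun h => (Finset.mem_erase.1 (hC.1 h)).1 rfl
    exact Finset.erase_insert haC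

lemma G_zero : G 0 = 1 := by rw [G]; simp

lemma G_even (t : ℕ) : G (2 * t + 2) = -(((2 * t + 1)‼ : ℤ) * ((2 * t - 1)‼ : ℤ)) := by
  rw [G, if_neg (by omega), if_pos ⟨t + 1, by ring⟩]
  congr 2 <;> omega

lemma G_odd (k : ℕ) (h : ¬ Even k) : G k = 0 := by
  rw [G, if_neg (by rintro rfl; exact h (Even.zero)), if_neg h]

noncomputable def dd : ℕ → ℚ := fun i => (G (2 * i) : ℚ) / ((2 * i).factorial : ℚ)

lemma PS : ∀ t : ℕ, ∑ i ∈ Finset.range (t + 1), dd i = ((2 * t - 1)‼ : ℚ) / ((2 * t)‼ : ℚ) := by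
  intro t
  induction t with
  | zero => simp [dd, G_zero]
  | succ t IH =>
    rw [Finset.sum_range_succ, IH]
    have hd : dd (t + 1) = -(((2 * t + 1)‼ : ℚ) * ((2 * t - 1)‼ : ℚ)) / ((2 * (t + 1)).factorial : ℚ) := by
      rw [dd, show 2 * (t + 1) = 2 * t + 2 by ring, G_even]
      push_cast
      ring
    rw [hd]
    have hfac : ((2 * (t + 1)).factorial : ℚ) = ((2 * t + 2)‼ : ℚ) * ((2 * t + 1)‼ : ℚ) := by
      rw [show 2 * (t + 1) = 2 * t + 1 + 1 by ring, Nat.factorial_eq_mul_doubleFactorial]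
      push_cast; ring
    have h1 : ((2 * (t + 1))‼ : ℚ) = ((2 * t + 2)‼ : ℚ) := by
      rw [show 2 * (t + 1) = 2 * t + 2 from by omega]
    have h2 : ((2 * t + 2)‼ : ℚ) = (2 * t + 2) * ((2 * t)‼ : ℚ) := by
      rw [Nat.doubleFactorial_add_two]; push_cast; ring
    have h3 : ((2 * (t + 1) - 1)‼ : ℚ) = ((2 * t + 1)‼ : ℚ) := by
      rw [show 2 * (t + 1) - 1 = 2 * t + 1 from by omega]
    have h4 : ((2 * t + 1)‼ : ℚ) = (2 * t + 1) * ((2 * t - 1)‼ : ℚ) := by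
      rcases Nat.eq_zero_or_pos t with rfl | ht
      · norm_num
      · rw [show 2 * t + 1 = (2 * t - 1) + 2 by omega, Nat.doubleFactorial_add_two]
        push_cast
        rw [show ((2 * t - 1 : ℕ) : ℚ) = 2 * t - 1 by push_cast [Nat.cast_sub (by omega : 1 ≤ 2 * t)]; ring]
        ring
    rw [hfac, h1, h3]
    have hne0 : ((2 * t)‼ : ℚ) ≠ 0 := by exact_mod_cast (Nat.doubleFactorial_pos _).ne'
    have hne1 : ((2 * t + 1)‼ : ℚ) ≠ 0 := by exact_mod_cast (Nat.doubleFactorial_pos _).ne'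
    have hne2 : ((2 * t + 2)‼ : ℚ) ≠ 0 := by exact_mod_cast (Nat.doubleFactorial_pos _).ne'
    field_simp
    rw [h4]
    linear_combination ((2 * t - 1)‼ : ℚ) * h2

lemma key (n : ℕ) (hn : 1 ≤ n) :
    ∑ k ∈ Finset.range (n + 1),
      (if Even k ∧ k ≠ 0 then ((n - 1).choose (k - 1) : ℤ) * (-(((k - 1).factorial : ℤ)) * G (n - k)) else 0)
    = G n := by
  classical
  rcases Nat.even_or_odd n with he | ho
  · -- even case
    obtain ⟨t, ht⟩ : ∃ t, n = 2 * t + 2 := by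
      obtain ⟨c, hc⟩ := he; exact ⟨c - 1, by omega⟩
    subst ht
    rw [← Finset.sum_filter]
    have himg : (Finset.range (2 * t + 2 + 1)).filter (fun k => Even k ∧ k ≠ 0)
        = (Finset.range (t + 1)).image (fun j => 2 * j + 2) := by
      ext k
      simp only [Finset.mem_filter, Finset.mem_range, Finset.mem_image]
      constructor
      · rintro ⟨hk, ⟨c, hc⟩, hk0⟩
        exact ⟨c - 1, by omega, by omega⟩
      · rintro ⟨j, hj, rfl⟩
        exact ⟨by omega, ⟨j + 1, by ring⟩, by omega⟩
    rw [himg, Finset.sum_image (by intro x _ y _ h; simp only at h; omega)]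
    have hidx : ∀ j ∈ Finset.range (t + 1),
        ((2 * t + 2 - 1).choose (2 * j + 2 - 1) : ℤ) * (-(((2 * j + 2 - 1).factorial : ℤ)) * G (2 * t + 2 - (2 * j + 2)))
        = ((2 * t + 1).choose (2 * j + 1) : ℤ) * (-(((2 * j + 1).factorial : ℤ)) * G (2 * (t - j))) := by
      intro j hj
      rw [Finset.mem_range] at hj
      rw [show 2 * t + 2 - 1 = 2 * t + 1 by omega, show 2 * j + 2 - 1 = 2 * j + 1 by omega,
        show 2 * t + 2 - (2 * j + 2) = 2 * (t - j) by omega]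
    rw [Finset.sum_congr rfl hidx]
    have hq : ((∑ j ∈ Finset.range (t + 1),
        ((2 * t + 1).choose (2 * j + 1) : ℤ) * (-(((2 * j + 1).factorial : ℤ)) * G (2 * (t - j))) : ℤ) : ℚ)
        = ((G (2 * t + 2) : ℤ) : ℚ) := by
      push_cast
      have hterm : ∀ j ∈ Finset.range (t + 1),
          ((2 * t + 1).choose (2 * j + 1) : ℚ) * (-(((2 * j + 1).factorial : ℚ)) * (G (2 * (t - j)) : ℚ))
          = -(((2 * t + 1).factorial : ℚ)) * dd (t - j) := by
        intro j hj
        rw [Finset.mem_range] at hj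
        have h1 : 2 * j + 1 ≤ 2 * t + 1 := by omega
        have hchoose : (2 * t + 1).choose (2 * j + 1) * (2 * j + 1).factorial * (2 * (t - j)).factorial
            = (2 * t + 1).factorial := by
          have := Nat.choose_mul_factorial_mul_factorial h1
          rwa [show 2 * t + 1 - (2 * j + 1) = 2 * (t - j) by omega] at this
        have hchq : ((2 * t + 1).choose (2 * j + 1) : ℚ) * ((2 * j + 1).factorial : ℚ) * ((2 * (t - j)).factorial : ℚ)
            = ((2 * t + 1).factorial : ℚ) := by exact_mod_cast congrArg (Nat.cast : ℕ → ℚ) hchoose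
        have hne : ((2 * (t - j)).factorial : ℚ) ≠ 0 := by
          exact_mod_cast (Nat.factorial_pos _).ne'
        rw [dd, ← hchq]
        field_simp
      rw [Finset.sum_congr rfl hterm, ← Finset.mul_sum]
      have hrefl : ∑ j ∈ Finset.range (t + 1), dd (t - j) = ∑ i ∈ Finset.range (t + 1), dd i := by
        have := Finset.sum_range_reflect (fun i => dd i) (t + 1)
        simpa using this
      rw [hrefl, PS t, G_even]
      push_cast
      have hf : ((2 * t + 1).factorial : ℚ) = ((2 * t + 1)‼ : ℚ) * ((2 * t)‼ : ℚ) := by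
        rw [Nat.factorial_eq_mul_doubleFactorial (2 * t)]; push_cast; ring
      have hne0 : ((2 * t)‼ : ℚ) ≠ 0 := by exact_mod_cast (Nat.doubleFactorial_pos _).ne'
      rw [hf]
      field_simp
    exact_mod_cast hq
  · -- odd case
    rw [G_odd n (Nat.not_even_iff_odd.2 ho)]
    apply Finset.sum_eq_zero
    intro k hk
    rw [Finset.mem_range] at hk
    by_cases hke : Even k ∧ k ≠ 0
    · rw [if_pos hke]
      have hkn : k ≤ n := by omega
      have : ¬ Even (n - k) := by
        rw [Nat.even_sub hkn]
        intro h
        exact (Nat.not_even_iff_odd.2 ho) (h.2 hke.1)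
      rw [G_odd _ this, mul_zero, mul_zero]
    · rw [if_neg hke]

lemma W_card : ∀ (n : ℕ) (s : Finset α), s.card = n → W s = G n := by
  intro n
  induction n using Nat.strong_induction_on with
  | _ n IH =>
    intro s hs
    rcases Nat.eq_zero_or_pos n with rfl | hn
    · rw [Finset.card_eq_zero] at hs
      subst hs
      rw [W_empty, G]
      simp
    · obtain ⟨a, ha⟩ := Finset.card_pos.1 (hs ▸ hn)
      rw [W_rec s a ha, ← key n hn]
      rw [← Finset.sum_fiberwise_of_maps_to (t := Finset.range (n + 1)) (g := fun B => B.card)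
        (fun B hB => Finset.mem_range.2 (by
          rw [Finset.mem_filter, Finset.mem_powerset] at hB
          exact Nat.lt_succ_of_le (hs ▸ Finset.card_le_card hB.1)))]
      refine Finset.sum_congr rfl fun k hk => ?_
      by_cases hke : Even k ∧ k ≠ 0
      · rw [if_pos hke]
        obtain ⟨j, hj⟩ : ∃ j, k = j + 1 := ⟨k - 1, by omega⟩
        have hfilt : (s.powerset.filter (fun B => a ∈ B ∧ Even B.card)).filter (fun B => B.card = k)
            = s.powerset.filter (fun B => a ∈ B ∧ B.card = k) := by
          ext B
          simp only [Finset.mem_filter, Finset.mem_powerset]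
          constructor
          · rintro ⟨⟨h1, h2, h3⟩, h4⟩; exact ⟨h1, h2, h4⟩
          · rintro ⟨h1, h2, h3⟩; exact ⟨⟨h1, h2, h3 ▸ hke.1⟩, h3⟩
        have hsum : ∀ B ∈ (s.powerset.filter (fun B => a ∈ B ∧ Even B.card)).filter (fun B => B.card = k),
            -(((B.card - 1).factorial : ℤ)) * W (s \ B)
            = -(((k - 1).factorial : ℤ)) * G (n - k) := by
          intro B hB
          simp only [Finset.mem_filter, Finset.mem_powerset] at hB
          obtain ⟨⟨hBs, haB, hBev⟩, hBk⟩ := hB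
          have hB1 : 1 ≤ B.card := Finset.card_pos.2 ⟨a, haB⟩
          have hcard : (s \ B).card = n - k := by
            rw [Finset.card_sdiff_of_subset hBs, hs, hBk]
          rw [hBk, IH (n - k) (by omega) _ hcard]
        rw [Finset.sum_congr rfl hsum, Finset.sum_const, hfilt]
        have hc : (s.powerset.filter (fun B => a ∈ B ∧ B.card = k)).card = (n - 1).choose (k - 1) := by
          rw [hj]
          have := count_lemma s a ha j
          rw [this, hs]; norm_num
        rw [hc, nsmul_eq_mul]
      · rw [if_neg hke]
        apply Finset.sum_eq_zero
        intro B hB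
        simp only [Finset.mem_filter, Finset.mem_powerset] at hB
        obtain ⟨⟨hBs, haB, hBev⟩, hBk⟩ := hB
        have : Even k ∧ k ≠ 0 := ⟨hBk ▸ hBev, by
          intro h; rw [h, Finset.card_eq_zero] at hBk
          exact Finset.notMem_empty a (hBk ▸ haB)⟩
        exact absurd this hke

end EP2

open Classical in
/-- For even `N ≥ 2`, the sum over all set partitions `π` of `{1,…,N}` with all
blocks of even cardinality of `(−1)^{|π|} ∏_{B∈π} (|B|−1)!` equals
`−(N−1)!! (N−3)!!`. -/
theorem stmt_3 (N : ℕ) (hN : 2 ≤ N) (hNe : Even N) :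
    ∑ P ∈ Finset.univ.filter (fun P : Finset (Finset (Fin N)) => IsEvenPartition N P),
        (-1 : ℤ) ^ P.card * ∏ B ∈ P, (Nat.factorial (B.card - 1) : ℤ) =
      -(Nat.doubleFactorial (N - 1) * Nat.doubleFactorial (N - 3) : ℤ) := by
  classical
  have h1 : ∑ P ∈ Finset.univ.filter (fun P : Finset (Finset (Fin N)) => IsEvenPartition N P),
        (-1 : ℤ) ^ P.card * ∏ B ∈ P, (Nat.factorial (B.card - 1) : ℤ)
      = W (Finset.univ : Finset (Fin N)) := by
    rw [W]
    apply Finset.sum_congr _ (fun _ _ => rfl)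
    rw [Finset.powerset_univ, Finset.powerset_univ]
    apply Finset.filter_congr
    intro P _
    exact Iff.rfl
  rw [h1, W_card N Finset.univ (by simp)]
  obtain ⟨t, ht⟩ : ∃ t, N = 2 * t + 2 := by
    obtain ⟨c, hc⟩ := hNe; exact ⟨c - 1, by omega⟩
  subst ht
  rw [G_even]
  have : 2 * t + 2 - 1 = 2 * t + 1 := by omega
  rw [this, show 2 * t + 2 - 3 = 2 * t - 1 from by omega]
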